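/- Let U = {u ∈ U₀ : Σᵢ uᵢ = b} with u_i ∈ ℝ^m, assume each penalty P_i(x_i, u_i) = φ(h_i(x_i) − u_i) with φ(v) > 0 whenever v ≰ 0 and φ continuous, and suppose μ: X → ℝ is weakly coercive with respect to X. Then the function η(w) = max{μ(x), P(w)} on X × U is weakly coercive with respect to X × U, i.e., there is a number r such that the level set {w = (x,u) ∈ X × U : η(w) ≤ r} is nonempty and bounded. -/

import Mathlib

open Filter Bornology

lemma euclid_sum_apply {M l : ℕ} (u : Fin l → EuclideanSpace ℝ (Fin M)) (j : Fin M) :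
    (∑ i, u i) j = ∑ i, u i j := by
  induction (Finset.univ : Finset (Fin l)) using Finset.induction with
  | empty => rfl
  | insert _ _ h ih => rw [Finset.sum_insert h, Finset.sum_insert h, ← ih]; rfl

lemma euclid_abs_coord_le_norm {M : ℕ} (a : EuclideanSpace ℝ (Fin M)) (j : Fin M) :
    |a j| ≤ ‖a‖ := by
  rw [EuclideanSpace.norm_eq a, ← Real.sqrt_sq_eq_abs]
  apply Real.sqrt_le_sqrt
  have h2 : (a j) ^ 2 = ‖a j‖ ^ 2 := by rw [Real.norm_eq_abs, sq_abs]
  rw [h2]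
  exact Finset.single_le_sum (f := fun i => ‖a i‖ ^ 2) (fun i _ => sq_nonneg _)
    (Finset.mem_univ j)

lemma euclid_norm_le_of_coord {M : ℕ} (a : EuclideanSpace ℝ (Fin M)) (K : ℝ)
    (hb : ∀ j, |a j| ≤ K) : ‖a‖ ≤ Real.sqrt (M * K ^ 2) := by
  rw [EuclideanSpace.norm_eq]
  apply Real.sqrt_le_sqrt
  calc ∑ j, ‖a j‖ ^ 2 ≤ ∑ _j : Fin M, K ^ 2 := by
        apply Finset.sum_le_sum
        intro j _
        rw [Real.norm_eq_abs]
        exact sq_le_sq' (by linarith [hb j, abs_nonneg (a j), neg_abs_le (a j)]) (hb j)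
    _ = M * K ^ 2 := by rw [Finset.sum_const, Finset.card_univ, Fintype.card_fin, nsmul_eq_mul]

lemma levelBounded {E : Type*} [NormedAddCommGroup E] [NormedSpace ℝ E] [ProperSpace E]
    {X : Set E} (hXc : Convex ℝ X) (hXcl : IsClosed X)
    {μ : E → ℝ} (hμconv : ConvexOn ℝ X μ) (hμlsc : LowerSemicontinuousOn μ X)
    {r₀ : ℝ} (hne : ({x ∈ X | μ x ≤ r₀}).Nonempty) (hbd : IsBounded {x ∈ X | μ x ≤ r₀})
    (r : ℝ) : IsBounded {x ∈ X | μ x ≤ r} := by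
  obtain ⟨x₀, hx₀X, hx₀μ⟩ := hne
  obtain ⟨R₀, hR₀⟩ := isBounded_iff_forall_norm_le.mp hbd
  have hR₀0 : 0 ≤ R₀ := le_trans (norm_nonneg x₀) (hR₀ x₀ ⟨hx₀X, hx₀μ⟩)
  set ρ : ℝ := R₀ + ‖x₀‖ + 1 with hρdef
  have hρpos : 0 < ρ := by positivity
  by_contra hc
  rw [isBounded_iff_forall_norm_le] at hc
  push_neg at hc
  have hseq : ∀ k : ℕ, ∃ x, (x ∈ X ∧ μ x ≤ r) ∧ ρ + ‖x₀‖ + k < ‖x‖ := by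
    intro k
    obtain ⟨x, hx, hxn⟩ := hc (ρ + ‖x₀‖ + k)
    exact ⟨x, hx, hxn⟩
  choose x hx hxn using hseq
  have hdist : ∀ k : ℕ, ρ + k < ‖x k - x₀‖ := by
    intro k
    have := hxn k
    have h2 : ‖x k‖ ≤ ‖x k - x₀‖ + ‖x₀‖ := by
      have he : x k - x₀ + x₀ = x k := by abel
      calc ‖x k‖ = ‖x k - x₀ + x₀‖ := by rw [he]
        _ ≤ ‖x k - x₀‖ + ‖x₀‖ := norm_add_le _ _
    linarith
  have hdistpos : ∀ k : ℕ, 0 < ‖x k - x₀‖ := fun k =>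
    lt_of_le_of_lt (by positivity) (hdist k)
  set lam : ℕ → ℝ := fun k => ρ / ‖x k - x₀‖ with hlam
  have hlampos : ∀ k, 0 < lam k := fun k => div_pos hρpos (hdistpos k)
  have hlamle : ∀ k, lam k ≤ 1 := by
    intro k
    rw [div_le_one (hdistpos k)]
    have : (0:ℝ) ≤ k := Nat.cast_nonneg k
    linarith [hdist k]
  set y : ℕ → E := fun k => x₀ + lam k • (x k - x₀) with hy
  have hyX : ∀ k, y k ∈ X := by
    intro k
    have : y k = (1 - lam k) • x₀ + lam k • x k := by
      simp only [hy, smul_sub, sub_smul, one_smul]; abel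
    rw [this]
    exact hXc hx₀X (hx k).1 (by linarith [hlamle k]) (le_of_lt (hlampos k)) (by ring)
  have hynorm : ∀ k, ‖y k - x₀‖ = ρ := by
    intro k
    simp only [hy, add_sub_cancel_left, norm_smul, Real.norm_eq_abs,
      abs_of_pos (hlampos k), hlam]
    field_simp
    rw [abs_of_pos (div_pos hρpos (hdistpos k))]
    field_simp
    exact div_self (ne_of_gt (hdistpos k))
  have hμy : ∀ k, μ (y k) ≤ r₀ + lam k * |r - r₀| := by
    intro k
    have hconv := hμconv.2 hx₀X (hx k).1 (by linarith [hlamle k]) (le_of_lt (hlampos k))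
      (by ring : (1 - lam k) + lam k = 1)
    have hyk : y k = (1 - lam k) • x₀ + lam k • x k := by
      simp only [hy, smul_sub, sub_smul, one_smul]; abel
    rw [← hyk, smul_eq_mul, smul_eq_mul] at hconv
    have h1 : (1 - lam k) * μ x₀ + lam k * μ (x k) ≤ (1 - lam k) * r₀ + lam k * r := by
      have h1a := hlampos k
      have h1b := hlamle k
      nlinarith [hx₀μ, (hx k).2]
    have h2 : (1 - lam k) * r₀ + lam k * r ≤ r₀ + lam k * |r - r₀| := by
      have h2a : (1 - lam k) * r₀ + lam k * r = r₀ + lam k * (r - r₀) := by ring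
      rw [h2a]
      have := le_abs_self (r - r₀)
      nlinarith [hlampos k]
    linarith [hconv]
  have hlamtend : Tendsto lam atTop (nhds 0) := by
    have hd : Tendsto (fun k : ℕ => ‖x k - x₀‖) atTop atTop := by
      apply tendsto_atTop_mono (fun k => (hdist k).le)
      apply tendsto_atTop_add_const_left
      exact tendsto_natCast_atTop_atTop
    simpa [hlam] using Tendsto.div_atTop tendsto_const_nhds hd
  have hball : ∀ k, y k ∈ Metric.closedBall x₀ ρ := by
    intro k
    rw [Metric.mem_closedBall, dist_eq_norm, hynorm k]
  obtain ⟨z, hz, ψ, hψmono, hψtend⟩ :=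
    (isCompact_closedBall x₀ ρ).tendsto_subseq hball
  have hzX : z ∈ X := hXcl.mem_of_tendsto hψtend (Eventually.of_forall fun m => hyX (ψ m))
  have hztendX : Tendsto (fun m => y (ψ m)) atTop (nhdsWithin z X) := by
    rw [tendsto_nhdsWithin_iff]
    exact ⟨hψtend, Eventually.of_forall fun m => hyX (ψ m)⟩
  have hμz : μ z ≤ r₀ := by
    by_contra hgt
    push_neg at hgt
    obtain ⟨c, hc1, hc2⟩ := exists_between hgt
    have hev1 : ∀ᶠ m in atTop, c < μ (y (ψ m)) :=
      hztendX.eventually (hμlsc z hzX c hc2)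
    have hlamψ : Tendsto (fun m => lam (ψ m)) atTop (nhds 0) :=
      hlamtend.comp hψmono.tendsto_atTop
    have hev2 : ∀ᶠ m in atTop, r₀ + lam (ψ m) * |r - r₀| < c := by
      have ht : Tendsto (fun m => r₀ + lam (ψ m) * |r - r₀|) atTop
          (nhds (r₀ + 0 * |r - r₀|)) :=
        tendsto_const_nhds.add (hlamψ.mul tendsto_const_nhds)
      simp only [zero_mul, add_zero] at ht
      exact ht.eventually_lt_const hc1
    obtain ⟨m, hm1, hm2⟩ := (hev1.and hev2).exists
    linarith [hμy (ψ m)]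
  have hznorm : ‖z - x₀‖ = ρ := by
    have h1 : Tendsto (fun m => ‖y (ψ m) - x₀‖) atTop (nhds ‖z - x₀‖) :=
      ((continuous_norm.comp (continuous_id.sub continuous_const)).tendsto z).comp hψtend
    have h2 : Tendsto (fun m => ‖y (ψ m) - x₀‖) atTop (nhds ρ) := by
      simp only [hynorm]
      exact tendsto_const_nhds
    exact tendsto_nhds_unique h1 h2
  have hzn : ‖z‖ ≤ R₀ := hR₀ z ⟨hzX, hμz⟩
  have h3 : ‖z - x₀‖ ≤ ‖z‖ + ‖x₀‖ := norm_sub_le _ _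
  rw [hznorm, hρdef] at h3
  linarith

/-- `η(w) = max(μ(x), P(w))` is weakly coercive with respect to `X × U`:
some level set of `η` in `X × U` is nonempty and bounded. -/
theorem statement13 {l M : ℕ} {n : Fin l → ℕ}
    (X : Set ((i : Fin l) → EuclideanSpace ℝ (Fin (n i))))
    (hXc : Convex ℝ X) (hXcl : IsClosed X)
    (U₀ : Set (Fin l → EuclideanSpace ℝ (Fin M))) (b : EuclideanSpace ℝ (Fin M))
    (μ : ((i : Fin l) → EuclideanSpace ℝ (Fin (n i))) → ℝ)
    (hμconv : ConvexOn ℝ X μ) (hμlsc : LowerSemicontinuousOn μ X)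
    (r₀ : ℝ) (hwc : ({x ∈ X | μ x ≤ r₀}).Nonempty ∧ IsBounded {x ∈ X | μ x ≤ r₀})
    (φ : EuclideanSpace ℝ (Fin M) → ℝ) (hφc : Continuous φ)
    (hφ0 : ∀ v, 0 ≤ φ v)
    (hφiff : ∀ v : EuclideanSpace ℝ (Fin M), φ v = 0 ↔ ∀ j, v j ≤ 0)
    (hφ_inf : ∀ (v : ℕ → EuclideanSpace ℝ (Fin M)) (t : Fin M),
      Tendsto (fun k => v k t) atTop atTop → Tendsto (fun k => φ (v k)) atTop atTop)
    (h : (i : Fin l) → EuclideanSpace ℝ (Fin (n i)) → EuclideanSpace ℝ (Fin M))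
    (hhc : ∀ i, Continuous (h i))
    (hfeas : ∀ x ∈ X, ∃ u ∈ U₀, (∑ i, u i = b) ∧ ∀ i j, h i (x i) j ≤ u i j) :
    ∃ r : ℝ,
      ({w : ((i : Fin l) → EuclideanSpace ℝ (Fin (n i))) ×
            (Fin l → EuclideanSpace ℝ (Fin M)) |
          w.1 ∈ X ∧ w.2 ∈ U₀ ∧ (∑ i, w.2 i = b) ∧
            max (μ w.1) (∑ i, φ (h i (w.1 i) - w.2 i)) ≤ r}).Nonempty ∧
      IsBounded
        {w : ((i : Fin l) → EuclideanSpace ℝ (Fin (n i))) ×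
            (Fin l → EuclideanSpace ℝ (Fin M)) |
          w.1 ∈ X ∧ w.2 ∈ U₀ ∧ (∑ i, w.2 i = b) ∧
            max (μ w.1) (∑ i, φ (h i (w.1 i) - w.2 i)) ≤ r} := by
  obtain ⟨hne0, hbd0⟩ := hwc
  set r : ℝ := max r₀ 0 with hrdef
  have hr0 : (0:ℝ) ≤ r := le_max_right _ _
  have hrr₀ : r₀ ≤ r := le_max_left _ _
  set W : Set (((i : Fin l) → EuclideanSpace ℝ (Fin (n i))) ×
      (Fin l → EuclideanSpace ℝ (Fin M))) :=
    {w | w.1 ∈ X ∧ w.2 ∈ U₀ ∧ (∑ i, w.2 i = b) ∧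
      max (μ w.1) (∑ i, φ (h i (w.1 i) - w.2 i)) ≤ r} with hWdef
  have hSbd : IsBounded {x ∈ X | μ x ≤ r} :=
    levelBounded hXc hXcl hμconv hμlsc hne0 hbd0 r
  obtain ⟨x₀, hx₀X, hx₀μ⟩ := hne0
  refine ⟨r, ?_, ?_⟩
  · -- nonempty
    obtain ⟨u₀, hu₀U, hu₀sum, hu₀ge⟩ := hfeas x₀ hx₀X
    refine ⟨(x₀, u₀), hx₀X, hu₀U, hu₀sum, ?_⟩
    have hz : ∀ i, φ (h i (x₀ i) - u₀ i) = 0 := by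
      intro i
      refine (hφiff _).mpr fun j => ?_
      have : (h i (x₀ i) - u₀ i) j = h i (x₀ i) j - u₀ i j := rfl
      rw [this]
      linarith [hu₀ge i j]
    have hsum0 : (∑ i, φ (h i (x₀ i) - u₀ i)) = 0 := by
      simp [hz]
    rw [hsum0]
    exact max_le (le_trans hx₀μ hrr₀) hr0
  · -- bounded
    -- x-part is in the sublevel set
    have hWx : ∀ w ∈ W, w.1 ∈ X ∧ μ w.1 ≤ r := by
      intro w hw
      exact ⟨hw.1, le_trans (le_max_left _ _) hw.2.2.2⟩
    -- each penalty term is ≤ r on W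
    have hpen : ∀ w ∈ W, ∀ i, φ (h i (w.1 i) - w.2 i) ≤ r := by
      intro w hw i
      have hs : (∑ i', φ (h i' (w.1 i') - w.2 i')) ≤ r :=
        le_trans (le_max_right _ _) hw.2.2.2
      exact le_trans
        (Finset.single_le_sum (f := fun i' => φ (h i' (w.1 i') - w.2 i'))
          (fun i' _ => hφ0 _) (Finset.mem_univ i)) hs
    -- gap bounds
    have hgap : ∀ (i : Fin l) (j : Fin M), ∃ C : ℝ,
        ∀ w ∈ W, h i (w.1 i) j - w.2 i j ≤ C := by
      intro i j
      by_contra hcon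
      push_neg at hcon
      choose w hwW hwgt using fun k : ℕ => hcon k
      set v : ℕ → EuclideanSpace ℝ (Fin M) := fun k => h i ((w k).1 i) - (w k).2 i with hv
      have hvt : Tendsto (fun k => v k j) atTop atTop := by
        apply tendsto_atTop_mono (fun k => (hwgt k).le)
        exact tendsto_natCast_atTop_atTop
      have hφt := hφ_inf v j hvt
      obtain ⟨k, hk⟩ := (hφt.eventually (eventually_gt_atTop r)).exists
      exact absurd (hpen (w k) (hwW k) i) (not_le.mpr hk)
    choose C hC using hgap
    set C₁ : ℝ := ∑ i, ∑ j, |C i j| with hC₁def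
    have hC₁nn : 0 ≤ C₁ := Finset.sum_nonneg fun i _ =>
      Finset.sum_nonneg fun j _ => abs_nonneg _
    have hC₁ : ∀ i j, C i j ≤ C₁ := by
      intro i j
      calc C i j ≤ |C i j| := le_abs_self _
        _ ≤ ∑ j', |C i j'| := Finset.single_le_sum (f := fun j' => |C i j'|)
            (fun j' _ => abs_nonneg _) (Finset.mem_univ j)
        _ ≤ C₁ := Finset.single_le_sum
            (f := fun i' => ∑ j', |C i' j'|)
            (fun i' _ => Finset.sum_nonneg fun j' _ => abs_nonneg _) (Finset.mem_univ i)
    -- bound of h on the sublevel set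
    obtain ⟨R, hR⟩ := isBounded_iff_forall_norm_le.mp hSbd
    have hBex : ∀ i : Fin l, ∃ B : ℝ, ∀ y ∈ Metric.closedBall
        (0 : EuclideanSpace ℝ (Fin (n i))) R, ‖h i y‖ ≤ B := by
      intro i
      obtain ⟨B, hB⟩ := isBounded_iff_forall_norm_le.mp
        (((isCompact_closedBall (0 : EuclideanSpace ℝ (Fin (n i))) R).image (hhc i)).isBounded)
      exact ⟨B, fun y hy => hB _ (Set.mem_image_of_mem _ hy)⟩
    choose B hB using hBex
    set B₁ : ℝ := ∑ i, |B i| with hB₁def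
    have hB₁nn : 0 ≤ B₁ := Finset.sum_nonneg fun i _ => abs_nonneg _
    have hhbound : ∀ w ∈ W, ∀ (i : Fin l) (j : Fin M), |h i (w.1 i) j| ≤ B₁ := by
      intro w hw i j
      have hx1 : ‖w.1‖ ≤ R := hR _ (hWx w hw)
      have hxi : ‖w.1 i‖ ≤ R := le_trans (norm_le_pi_norm w.1 i) hx1
      have hmem : w.1 i ∈ Metric.closedBall (0 : EuclideanSpace ℝ (Fin (n i))) R := by
        rw [Metric.mem_closedBall, dist_zero_right]; exact hxi
      calc |h i (w.1 i) j| ≤ ‖h i (w.1 i)‖ := euclid_abs_coord_le_norm _ j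
        _ ≤ B i := hB i _ hmem
        _ ≤ |B i| := le_abs_self _
        _ ≤ B₁ := Finset.single_le_sum (f := fun i' => |B i'|)
            (fun i' _ => abs_nonneg _) (Finset.mem_univ i)
    -- lower bound on u-coordinates
    have hlow : ∀ w ∈ W, ∀ (i : Fin l) (j : Fin M), -(B₁ + C₁) ≤ w.2 i j := by
      intro w hw i j
      have h1 : h i (w.1 i) j - w.2 i j ≤ C₁ := le_trans (hC i j w hw) (hC₁ i j)
      have h2 := hhbound w hw i j
      have h3 := neg_abs_le (h i (w.1 i) j)
      linarith
    set K : ℝ := ‖b‖ + (l + 1) * (B₁ + C₁) with hKdef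
    have hK0 : 0 ≤ K := by
      have : (0:ℝ) ≤ (l + 1) * (B₁ + C₁) := by positivity
      have := norm_nonneg b
      linarith
    have hKbound : ∀ w ∈ W, ∀ (i : Fin l) (j : Fin M), |w.2 i j| ≤ K := by
      intro w hw i j
      rw [abs_le]
      constructor
      · have h1 := hlow w hw i j
        have h2 : B₁ + C₁ ≤ (l + 1) * (B₁ + C₁) := by nlinarith [hB₁nn, hC₁nn]
        have := norm_nonneg b
        rw [hKdef]; linarith
      · -- upper bound using the sum constraint
        have hsumj : (∑ i', w.2 i' j) = b j := by
          rw [← euclid_sum_apply w.2 j, hw.2.2.1]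
        have hsplit : (∑ i', w.2 i' j) =
            w.2 i j + ∑ i' ∈ Finset.univ.erase i, w.2 i' j := by
          exact (Finset.add_sum_erase _ (fun i' => w.2 i' j) (Finset.mem_univ i)).symm
        have hrest : -(l * (B₁ + C₁)) ≤ ∑ i' ∈ Finset.univ.erase i, w.2 i' j := by
          have hcard : (Finset.univ.erase i).card ≤ l := by
            calc (Finset.univ.erase i).card ≤ (Finset.univ : Finset (Fin l)).card :=
                Finset.card_le_card (Finset.erase_subset _ _)
              _ = l := by simp
          have h4 : (Finset.univ.erase i).card • (-(B₁ + C₁)) ≤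
              ∑ i' ∈ Finset.univ.erase i, w.2 i' j :=
            Finset.card_nsmul_le_sum _ _ _ (fun i' _ => hlow w hw i' j)
          have h5 : -(l * (B₁ + C₁)) ≤ (Finset.univ.erase i).card • (-(B₁ + C₁)) := by
            rw [nsmul_eq_mul]
            have hc : ((Finset.univ.erase i).card : ℝ) ≤ l := by exact_mod_cast hcard
            nlinarith [hB₁nn, hC₁nn]
          linarith
        have hbj : b j ≤ ‖b‖ := le_trans (le_abs_self _) (euclid_abs_coord_le_norm b j)
        have : w.2 i j ≤ b j + l * (B₁ + C₁) := by
          rw [← hsumj, hsplit] at *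
          linarith
        have h6 : (l:ℝ) * (B₁ + C₁) ≤ (l + 1) * (B₁ + C₁) := by nlinarith [hB₁nn, hC₁nn]
        rw [hKdef]
        linarith
    -- conclude boundedness via product
    have hsub : W ⊆ ({x ∈ X | μ x ≤ r}) ×ˢ
        Metric.closedBall (0 : Fin l → EuclideanSpace ℝ (Fin M)) (Real.sqrt (M * K ^ 2)) := by
      intro w hw
      refine ⟨hWx w hw, ?_⟩
      rw [Metric.mem_closedBall, dist_zero_right]
      refine pi_norm_le_iff_of_nonneg (Real.sqrt_nonneg _) |>.mpr fun i => ?_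
      exact euclid_norm_le_of_coord (w.2 i) K (fun j => hKbound w hw i j)
    exact (hSbd.prod Metric.isBounded_closedBall).subset hsub
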